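/- Let F be a bipartite multigraph and n ∈ ℕ. For an (n,n)-vertex edge-weighted bipartite graph G = (x_{i,j})_{i,j ∈ [n]}, define the (2n,2n)-graph G⁻ with vertices indexed by {A,B} × [n], where y_{(s,i),(t,j)} = 1 if s = t and i = j, y_{(s,i),(t,j)} = 0 if s = t and i ≠ j, y_{(A,i),(B,j)} = x_{i,j}, and y_{(B,i),(A,j)} = x_{j,i}. Then hom_{F,2n}(G⁻) = Σ_{s : V(F) → {A,B}} hom_{F⊘s, n}(G), where F⊘s is the multigraph obtained by contracting every connected component of the subgraph on the monochromatic edges L = {uv ∈ E(F) : s(u) = s(v)} and keeping the edges of E(F) \ L. -/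

import Mathlib

/-- A bipartite multigraph: finite vertex sets `A`, `B` and a multiset of edges. -/
structure BipartiteMultigraph where
  A : Type
  B : Type
  [fintypeA : Fintype A]
  [fintypeB : Fintype B]
  [decA : DecidableEq A]
  [decB : DecidableEq B]
  edges : Multiset (A × B)

attribute [instance] BipartiteMultigraph.fintypeA BipartiteMultigraph.fintypeB
  BipartiteMultigraph.decA BipartiteMultigraph.decB

/-- `hom_{F,·}` evaluated at edge weights `w : I → I → K`. -/
def homEval (K : Type) [CommSemiring K] (F : BipartiteMultigraph)
    (I : Type) [Fintype I] [DecidableEq I] (w : I → I → K) : K :=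
  ∑ f : F.A → I, ∑ g : F.B → I,
    (F.edges.map fun e => w (f e.1) (g e.2)).prod

open Classical

/-- Two vertices of `F` are related if they are joined by a monochromatic edge with respect
to the side-assignment `s : V(F) → {A,B}` (here `true` codes the side `A`). -/
def monoRel (F : BipartiteMultigraph) (s : F.A ⊕ F.B → Bool)
    (u v : F.A ⊕ F.B) : Prop :=
  ∃ e ∈ F.edges, s (Sum.inl e.1) = s (Sum.inr e.2) ∧
    ((u = Sum.inl e.1 ∧ v = Sum.inr e.2) ∨ (u = Sum.inr e.2 ∧ v = Sum.inl e.1))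

/-- The homomorphism evaluation of the quotient multigraph `F ⊘ s` at `G`: the sum ranges
over the maps `V(F) → [n]` that are constant on the connected components of the
monochromatic subgraph `(V(F), L)` (these correspond exactly to the maps
`V(F⊘s) → [n]`), and the product over the edges in `E(F) \ L`, oriented according to `s`
(`s = true` is the left side `A`). -/
noncomputable def quotHomEval (K : Type) [CommRing K] (F : BipartiteMultigraph)
    (s : F.A ⊕ F.B → Bool) (n : ℕ) (G : Fin n → Fin n → K) : K :=
  ∑ h ∈ Finset.univ.filter
      (fun h : F.A ⊕ F.B → Fin n => ∀ u v, Relation.EqvGen (monoRel F s) u v → h u = h v),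
    ((F.edges.filter fun e => ¬ s (Sum.inl e.1) = s (Sum.inr e.2)).map
      (fun e =>
        if s (Sum.inl e.1) = true then G (h (Sum.inl e.1)) (h (Sum.inr e.2))
        else G (h (Sum.inr e.2)) (h (Sum.inl e.1)))).prod

section Aux

lemma sum_arrow_prod {γ : Type} [Fintype γ] [DecidableEq γ] {K : Type} [AddCommMonoid K]
    {n : ℕ} (φ : (γ → Bool × Fin n) → K) :
    (∑ f : γ → Bool × Fin n, φ f)
      = ∑ a : γ → Bool, ∑ b : γ → Fin n, φ (fun x => (a x, b x)) := by
  rw [← Equiv.sum_comp (Equiv.arrowProdEquivProdArrow γ (fun _ => Bool) (fun _ => Fin n)).symm φ,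
    Fintype.sum_prod_type]
  rfl

lemma sum_sum_arrow {α β γ : Type} [Fintype α] [Fintype β] [Fintype γ]
    [DecidableEq α] [DecidableEq β] {K : Type}
    [AddCommMonoid K] (φ : (α ⊕ β → γ) → K) :
    (∑ f : α ⊕ β → γ, φ f) = ∑ a : α → γ, ∑ b : β → γ, φ (Sum.elim a b) := by
  rw [← Equiv.sum_comp (Equiv.sumArrowEquivProdArrow α β γ).symm φ, Fintype.sum_prod_type]
  rfl

lemma cond_iff (F : BipartiteMultigraph) (s : F.A ⊕ F.B → Bool) {n : ℕ}
    (h : F.A ⊕ F.B → Fin n) :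
    (∀ u v, Relation.EqvGen (monoRel F s) u v → h u = h v) ↔
      ∀ e ∈ F.edges, s (Sum.inl e.1) = s (Sum.inr e.2) →
        h (Sum.inl e.1) = h (Sum.inr e.2) := by
  constructor
  · intro H e he hs
    exact H _ _ (Relation.EqvGen.rel _ _ ⟨e, he, hs, Or.inl ⟨rfl, rfl⟩⟩)
  · intro H u v huv
    induction huv with
    | rel u v r =>
      obtain ⟨e, he, hs, h1 | h1⟩ := r
      · rw [h1.1, h1.2]; exact H e he hs
      · rw [h1.1, h1.2]; exact (H e he hs).symm
    | refl => rfl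
    | symm _ _ _ ih => exact ih.symm
    | trans _ _ _ _ _ ih1 ih2 => exact ih1.trans ih2

end Aux


/-- `hom_{F,2n}(G⁻) = Σ_{s : V(F) → {A,B}} hom_{F⊘s, n}(G)`, where `[2n]` is identified
with `Bool × [n]` (with `true` coding `A`) and `G⁻` is the doubled graph with identity
weights within each side and the weights of `G` across sides. -/
theorem homEval_doubled (K : Type) [CommRing K] (F : BipartiteMultigraph) (n : ℕ)
    (G : Fin n → Fin n → K) :
    homEval K F (Bool × Fin n)
      (fun p q =>
        if p.1 = q.1 then (if p.2 = q.2 then (1 : K) else 0)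
        else if p.1 = true then G p.2 q.2 else G q.2 p.2) =
    ∑ s : F.A ⊕ F.B → Bool, quotHomEval K F s n G := by

  classical
  have key : ∀ (sA : F.A → Bool) (sB : F.B → Bool) (hA : F.A → Fin n) (hB : F.B → Fin n),
      (F.edges.map fun e =>
        (if sA e.1 = sB e.2 then (if hA e.1 = hB e.2 then (1 : K) else 0)
          else if sA e.1 = true then G (hA e.1) (hB e.2) else G (hB e.2) (hA e.1))).prod
      = (if (∀ u v, Relation.EqvGen (monoRel F (Sum.elim sA sB)) u v →
            Sum.elim hA hB u = Sum.elim hA hB v) then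
          ((F.edges.filter fun e =>
              ¬ (Sum.elim sA sB) (Sum.inl e.1) = (Sum.elim sA sB) (Sum.inr e.2)).map
            (fun e => if (Sum.elim sA sB) (Sum.inl e.1) = true
              then G ((Sum.elim hA hB) (Sum.inl e.1)) ((Sum.elim hA hB) (Sum.inr e.2))
              else G ((Sum.elim hA hB) (Sum.inr e.2)) ((Sum.elim hA hB) (Sum.inl e.1)))).prod
        else 0) := by
    intro sA sB hA hB
    simp only [cond_iff F (Sum.elim sA sB), Sum.elim_inl, Sum.elim_inr]
    conv_lhs => rw [← Multiset.filter_add_not (fun e => sA e.1 = sB e.2) F.edges]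
    rw [Multiset.map_add, Multiset.prod_add]
    have hmono : ((F.edges.filter fun e => sA e.1 = sB e.2).map fun e =>
        (if sA e.1 = sB e.2 then (if hA e.1 = hB e.2 then (1 : K) else 0)
          else if sA e.1 = true then G (hA e.1) (hB e.2) else G (hB e.2) (hA e.1))).prod
        = (if (∀ e ∈ F.edges, sA e.1 = sB e.2 → hA e.1 = hB e.2) then (1 : K) else 0) := by
      by_cases hc : ∀ e ∈ F.edges, sA e.1 = sB e.2 → hA e.1 = hB e.2
      · rw [if_pos hc]
        apply Multiset.prod_eq_one
        intro x hx
        obtain ⟨e, he, rfl⟩ := Multiset.mem_map.1 hx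
        have h2 := Multiset.mem_filter.1 he
        simp [h2.2, hc e h2.1 h2.2]
      · rw [if_neg hc]
        push_neg at hc
        obtain ⟨e, he, hse, hhe⟩ := hc
        apply Multiset.prod_eq_zero
        refine Multiset.mem_map.2 ⟨e, Multiset.mem_filter.2 ⟨he, hse⟩, ?_⟩
        simp [hse, hhe]
    have hbi : ((F.edges.filter fun e => ¬ sA e.1 = sB e.2).map fun e =>
        (if sA e.1 = sB e.2 then (if hA e.1 = hB e.2 then (1 : K) else 0)
          else if sA e.1 = true then G (hA e.1) (hB e.2) else G (hB e.2) (hA e.1)))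
        = ((F.edges.filter fun e => ¬ sA e.1 = sB e.2).map fun e =>
          (if sA e.1 = true then G (hA e.1) (hB e.2) else G (hB e.2) (hA e.1))) := by
      apply Multiset.map_congr rfl
      intro e he
      have h2 := Multiset.mem_filter.1 he
      rw [if_neg h2.2]
    rw [hmono, hbi, ite_mul, one_mul, zero_mul]
    congr
  simp only [homEval]
  rw [sum_arrow_prod]
  rw [sum_sum_arrow (fun s => quotHomEval K F s n G)]
  refine Finset.sum_congr rfl fun sA _ => ?_
  rw [Finset.sum_comm]
  rw [sum_arrow_prod]
  refine Finset.sum_congr rfl fun sB _ => ?_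
  rw [quotHomEval, Finset.sum_filter, sum_sum_arrow]
  rw [Finset.sum_comm]
  refine Finset.sum_congr rfl fun hA _ => Finset.sum_congr rfl fun hB _ => ?_
  simpa using key sA sB hA hB
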